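/- Let k > 0 and c > 3k, and set ξ₀ := √((c − 3k)/(2k)). Then the improper integral ∫₀^{c−3k} √(c − k − t)/√(c − 3k − t) dt converges and equals 2k (ξ₀ √(1 + ξ₀²) + arcsinh ξ₀). Consequently M(c) := 2 ∫₀^{c−3k} √(c − k − t)/√(c − 3k − t) dt = 4k (ξ₀ √(1 + ξ₀²) + arcsinh ξ₀). -/

import Mathlib

open Real MeasureTheory intervalIntegral Set Filter

/-- The mass integral of the Camassa–Holm solitary wave: the improper integral
`∫₀^{c-3k} √(c-k-t)/√(c-3k-t) dt` converges and equals
`2k (ξ₀ √(1+ξ₀²) + arcsinh ξ₀)` with `ξ₀ = √((c-3k)/(2k))`; consequently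
`M(c) = 2 ∫₀^{c-3k} … = 4k (ξ₀ √(1+ξ₀²) + arcsinh ξ₀)`. -/
theorem mass_integral_value (k c : ℝ) (hk : 0 < k) (hc : 3 * k < c) :
    IntervalIntegrable (fun t => Real.sqrt (c - k - t) / Real.sqrt (c - 3 * k - t))
      MeasureTheory.volume 0 (c - 3 * k) ∧
    (∫ t in (0 : ℝ)..(c - 3 * k), Real.sqrt (c - k - t) / Real.sqrt (c - 3 * k - t)) =
      2 * k * (Real.sqrt ((c - 3 * k) / (2 * k)) *
          Real.sqrt (1 + (Real.sqrt ((c - 3 * k) / (2 * k))) ^ 2) +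
        Real.arsinh (Real.sqrt ((c - 3 * k) / (2 * k)))) ∧
    2 * (∫ t in (0 : ℝ)..(c - 3 * k), Real.sqrt (c - k - t) / Real.sqrt (c - 3 * k - t)) =
      4 * k * (Real.sqrt ((c - 3 * k) / (2 * k)) *
          Real.sqrt (1 + (Real.sqrt ((c - 3 * k) / (2 * k))) ^ 2) +
        Real.arsinh (Real.sqrt ((c - 3 * k) / (2 * k)))) := by
  have ha0 : 0 < c - 3 * k := by linarith
  have hk2 : (0:ℝ) < 2 * k := by linarith
  set a : ℝ := c - 3 * k with ha
  -- integrability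
  have hint : IntervalIntegrable (fun t => Real.sqrt (c - k - t) / Real.sqrt (c - 3 * k - t))
      volume 0 a := by
    have h1 : IntervalIntegrable (fun x : ℝ => x ^ (-(1:ℝ)/2)) volume 0 a :=
      intervalIntegrable_rpow' (by norm_num)
    have h2 : IntervalIntegrable (fun x : ℝ => Real.sqrt (c - k) * (a - x) ^ (-(1:ℝ)/2))
        volume 0 a := by
      have := (h1.comp_sub_left a).symm
      simpa using this.const_mul (Real.sqrt (c - k))
    refine h2.mono_fun' ?_ ?_
    · exact ((Real.continuous_sqrt.comp (continuous_const.sub continuous_id)).measurable.div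
        (Real.continuous_sqrt.comp (continuous_const.sub continuous_id)).measurable
        ).aestronglyMeasurable
    · rw [uIoc_of_le ha0.le]
      filter_upwards [ae_restrict_mem measurableSet_Ioc] with t ht
      have h0t : 0 < t := ht.1
      have hta : t ≤ a := ht.2
      have hrw : (a - t) ^ (-(1:ℝ)/2) = (Real.sqrt (a - t))⁻¹ := by
        rw [Real.sqrt_eq_rpow, ← Real.rpow_neg (by linarith)]
        norm_num
      have hnn : 0 ≤ Real.sqrt (c - k - t) / Real.sqrt (c - 3 * k - t) :=
        div_nonneg (Real.sqrt_nonneg _) (Real.sqrt_nonneg _)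
      simp only [Real.norm_eq_abs, abs_of_nonneg hnn, hrw]
      have hnum : Real.sqrt (c - k - t) ≤ Real.sqrt (c - k) :=
        Real.sqrt_le_sqrt (by linarith)
      have e : c - 3 * k - t = a - t := by rw [ha]
      rcases hta.eq_or_lt with h | h
      · have e1 : c - 3 * k - t = 0 := by rw [e, h]; ring
        rw [e1]
        simp
      · rw [e, div_eq_mul_inv]
        exact mul_le_mul_of_nonneg_right hnum (inv_nonneg.2 (Real.sqrt_nonneg _))
  have hval : (∫ t in (0:ℝ)..a, Real.sqrt (c - k - t) / Real.sqrt (c - 3 * k - t)) =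
      2 * k * (Real.sqrt (a / (2 * k)) * Real.sqrt (1 + Real.sqrt (a / (2 * k)) ^ 2) +
        Real.arsinh (Real.sqrt (a / (2 * k)))) := by
    set F : ℝ → ℝ := fun t =>
      -(Real.sqrt ((a - t) * (a - t + 2 * k)) +
        2 * k * Real.arsinh (Real.sqrt ((a - t) / (2 * k)))) with hF
    have hcont : ContinuousOn F (Icc 0 a) := by
      apply Continuous.continuousOn
      have c1 : Continuous fun t : ℝ => (a - t) * (a - t + 2 * k) :=
        (continuous_const.sub continuous_id).mul
          ((continuous_const.sub continuous_id).add continuous_const)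
      have c2 : Continuous fun t : ℝ => (a - t) / (2 * k) :=
        (continuous_const.sub continuous_id).div_const _
      exact (c1.sqrt.add (continuous_const.mul
        (Real.continuous_arsinh.comp c2.sqrt))).neg
    have hderiv : ∀ x ∈ Ioo 0 a, HasDerivWithinAt F
        (Real.sqrt (c - k - x) / Real.sqrt (c - 3 * k - x)) (Ioi x) x := by
      intro x hx
      have hu0 : 0 < a - x := by linarith [hx.2]
      set u : ℝ := a - x with hu
      have hu2k : 0 < u + 2 * k := by linarith
      have hd1 : HasDerivAt (fun t : ℝ => a - t) (-1) x := by
        simpa using (hasDerivAt_id x).const_sub a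
      have hd2 : HasDerivAt (fun t : ℝ => (a - t) * (a - t + 2 * k))
          (-1 * (u + 2 * k) + u * -1) x := hd1.mul (hd1.add_const (2 * k))
      have hmul : u * (u + 2 * k) ≠ 0 := by positivity
      have hd3 : HasDerivAt (fun t : ℝ => Real.sqrt ((a - t) * (a - t + 2 * k)))
          (1 / (2 * Real.sqrt (u * (u + 2 * k))) * (-1 * (u + 2 * k) + u * -1)) x :=
        (Real.hasDerivAt_sqrt hmul).comp x hd2
      have hd4 : HasDerivAt (fun t : ℝ => (a - t) / (2 * k)) (-1 / (2 * k)) x :=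
        hd1.div_const (2 * k)
      have hne : u / (2 * k) ≠ 0 := by positivity
      have hd5 : HasDerivAt (fun t : ℝ => Real.sqrt ((a - t) / (2 * k)))
          (1 / (2 * Real.sqrt (u / (2 * k))) * (-1 / (2 * k))) x :=
        (Real.hasDerivAt_sqrt hne).comp x hd4
      have hd6 : HasDerivAt (fun t : ℝ => Real.arsinh (Real.sqrt ((a - t) / (2 * k))))
          ((Real.sqrt (1 + Real.sqrt (u / (2 * k)) ^ 2))⁻¹ *
            (1 / (2 * Real.sqrt (u / (2 * k))) * (-1 / (2 * k)))) x :=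
        (Real.hasDerivAt_arsinh _).comp x hd5
      have hd7 : HasDerivAt F
          (-(1 / (2 * Real.sqrt (u * (u + 2 * k))) * (-1 * (u + 2 * k) + u * -1) +
            2 * k * ((Real.sqrt (1 + Real.sqrt (u / (2 * k)) ^ 2))⁻¹ *
              (1 / (2 * Real.sqrt (u / (2 * k))) * (-1 / (2 * k)))))) x :=
        (hd3.add (hd6.const_mul (2 * k))).neg
      have heq : -(1 / (2 * Real.sqrt (u * (u + 2 * k))) * (-1 * (u + 2 * k) + u * -1) +
            2 * k * ((Real.sqrt (1 + Real.sqrt (u / (2 * k)) ^ 2))⁻¹ *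
              (1 / (2 * Real.sqrt (u / (2 * k))) * (-1 / (2 * k))))) =
          Real.sqrt (c - k - x) / Real.sqrt (c - 3 * k - x) := by
        have e1 : c - k - x = u + 2 * k := by rw [hu, ha]; ring
        have e2 : c - 3 * k - x = u := by rw [hu, ha]
        rw [e1, e2]
        have s1 : Real.sqrt (u * (u + 2 * k)) = Real.sqrt u * Real.sqrt (u + 2 * k) :=
          Real.sqrt_mul hu0.le _
        have s2 : (1 : ℝ) + Real.sqrt (u / (2 * k)) ^ 2 = (u + 2 * k) / (2 * k) := by
          rw [Real.sq_sqrt (by positivity)]; field_simp; ring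
        have s3 : Real.sqrt ((u + 2 * k) / (2 * k))
            = Real.sqrt (u + 2 * k) / Real.sqrt (2 * k) := Real.sqrt_div hu2k.le _
        have s4 : Real.sqrt (u / (2 * k)) = Real.sqrt u / Real.sqrt (2 * k) :=
          Real.sqrt_div hu0.le _
        rw [s1, s2, s3, s4]
        have hsu : Real.sqrt u ^ 2 = u := Real.sq_sqrt hu0.le
        have hsv : Real.sqrt (u + 2 * k) ^ 2 = u + 2 * k := Real.sq_sqrt hu2k.le
        have hsk : Real.sqrt (2 * k) ^ 2 = 2 * k := Real.sq_sqrt hk2.le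
        have hsu0 : Real.sqrt u ≠ 0 := by positivity
        have hsv0 : Real.sqrt (u + 2 * k) ≠ 0 := by positivity
        have hsk0 : Real.sqrt (2 * k) ≠ 0 := by positivity
        have h2k : Real.sqrt 2 * Real.sqrt k * (Real.sqrt 2 * Real.sqrt k) = 2 * k := by
          rw [← Real.sqrt_mul (by norm_num : (0:ℝ) ≤ 2) k]
          exact Real.mul_self_sqrt hk2.le
        field_simp
        linear_combination hsk - 2 * hsv
      rw [← heq]
      exact hd7.hasDerivWithinAt
    have key := integral_eq_sub_of_hasDeriv_right_of_le ha0.le hcont hderiv hint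
    rw [key, hF]
    have hFa : a - a = 0 := by ring
    simp only [hFa, sub_zero, Real.sqrt_zero, zero_mul, zero_div, zero_mul,
      Real.arsinh_zero, mul_zero, add_zero, zero_add, neg_zero, zero_sub, neg_neg]
    have s2 : (1 : ℝ) + Real.sqrt (a / (2 * k)) ^ 2 = (a + 2 * k) / (2 * k) := by
      rw [Real.sq_sqrt (by positivity)]; field_simp; ring
    rw [s2, Real.sqrt_div (by positivity : (0:ℝ) ≤ a + 2 * k),
      Real.sqrt_div ha0.le, Real.sqrt_mul ha0.le]
    have hsk : Real.sqrt (2 * k) ^ 2 = 2 * k := Real.sq_sqrt hk2.le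
    have hsk0 : Real.sqrt (2 * k) ≠ 0 := by positivity
    have h2k : Real.sqrt 2 * Real.sqrt k * (Real.sqrt 2 * Real.sqrt k) = 2 * k := by
      rw [← Real.sqrt_mul (by norm_num : (0:ℝ) ≤ 2) k]
      exact Real.mul_self_sqrt hk2.le
    field_simp
    linear_combination (Real.sqrt a * Real.sqrt (a + 2 * k)) * hsk
  exact ⟨hint, hval, by rw [hval]; ring⟩
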